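/- Let F be a linearly ordered field and consider the Cartesian plane F². Let A, B, C ∈ F² be non-collinear, let ℓ = (a, b, c) be a line with (a, b) ≠ (0, 0) such that none of A, B, C lies on ℓ, and suppose there is a point D on ℓ strictly between A and B. Then there exists a point D' on ℓ which is strictly between A and C or strictly between B and C. (Pasch's axiom (B-4) holds in the plane over any ordered field.) -/

import Mathlib

/-- `Q` lies strictly between `P` and `R` in the plane over a linearly ordered
field: `Q = P + t·(R − P)` for some `0 < t < 1`, and `P ≠ R`. -/
def StrictBtw {F : Type*} [Field F] [LinearOrder F] [IsStrictOrderedRing F] (P Q R : F × F) : Prop :=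
  P ≠ R ∧ ∃ t : F, 0 < t ∧ t < 1 ∧ Q = P + t • (R - P)

private lemma aux_affine {F : Type*} [Field F] [LinearOrder F] [IsStrictOrderedRing F] (a b c t : F) (P R : F × F) :
    a * (P + t • (R - P)).1 + b * (P + t • (R - P)).2 + c
      = (1 - t) * (a * P.1 + b * P.2 + c) + t * (a * R.1 + b * R.2 + c) := by
  simp only [Prod.fst_add, Prod.snd_add, Prod.smul_fst, Prod.smul_snd, Prod.fst_sub,
    Prod.snd_sub, smul_eq_mul]
  ring

private lemma aux_cross {F : Type*} [Field F] [LinearOrder F] [IsStrictOrderedRing F] {a b c : F} {P R : F × F}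
    (h : (a * P.1 + b * P.2 + c) * (a * R.1 + b * R.2 + c) < 0) :
    ∃ D' : F × F, a * D'.1 + b * D'.2 + c = 0 ∧ StrictBtw P D' R := by
  set p := a * P.1 + b * P.2 + c with hp
  set r := a * R.1 + b * R.2 + c with hr
  have hpr : p ≠ r := by
    intro he
    rw [he] at h
    nlinarith
  have hne : p - r ≠ 0 := sub_ne_zero.mpr hpr
  set t := p / (p - r) with ht
  have htd : t * (p - r) = p := div_mul_cancel₀ _ hne
  have hpc : p ≠ 0 := fun he => by simp [he] at h
  have ht0 : 0 < t := by
    rcases lt_or_gt_of_ne hpc with h1 | h1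
    · have hr0 : 0 < r := by nlinarith
      nlinarith
    · have hr0 : r < 0 := by nlinarith
      nlinarith
  have ht1 : t < 1 := by
    rcases lt_or_gt_of_ne hpc with h1 | h1
    · have hr0 : 0 < r := by nlinarith
      nlinarith
    · have hr0 : r < 0 := by nlinarith
      nlinarith
  refine ⟨P + t • (R - P), ?_, ?_, t, ht0, ht1, rfl⟩
  · rw [aux_affine, ← hp, ← hr]
    linear_combination -htd
  · intro hePR
    rw [hePR] at hp
    exact hpr (hp.trans hr.symm)

/-- Pasch's axiom (B-4) holds in the Cartesian plane over any
linearly ordered field. -/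
theorem stmt_10 {F : Type*} [Field F] [LinearOrder F] [IsStrictOrderedRing F]
    (A B C : F × F) (hncol : ¬ Collinear F ({A, B, C} : Set (F × F)))
    (a b c : F) (hl : (a, b) ≠ ((0 : F), (0 : F)))
    (hA : a * A.1 + b * A.2 + c ≠ 0)
    (hB : a * B.1 + b * B.2 + c ≠ 0)
    (hC : a * C.1 + b * C.2 + c ≠ 0)
    (D : F × F) (hD : a * D.1 + b * D.2 + c = 0) (hDbtw : StrictBtw A D B) :
    ∃ D' : F × F, a * D'.1 + b * D'.2 + c = 0 ∧
      (StrictBtw A D' C ∨ StrictBtw B D' C) := by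
  obtain ⟨hAB, t, ht0, ht1, hDeq⟩ := hDbtw
  have hcomb : (1 - t) * (a * A.1 + b * A.2 + c) + t * (a * B.1 + b * B.2 + c) = 0 := by
    rw [← aux_affine a b c t A B, ← hDeq, hD]
  have hAB0 : (a * A.1 + b * A.2 + c) * (a * B.1 + b * B.2 + c) < 0 := by
    rcases lt_or_gt_of_ne hA with h1 | h1 <;> rcases lt_or_gt_of_ne hB with h2 | h2 <;>
      nlinarith
  rcases lt_or_gt_of_ne hC with h3 | h3
  · rcases lt_or_gt_of_ne hA with h1 | h1
    · have h2 : 0 < a * B.1 + b * B.2 + c := by nlinarith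
      obtain ⟨D', hD', hbtw⟩ := aux_cross (P := B) (R := C) (a := a) (b := b) (c := c)
        (by nlinarith)
      exact ⟨D', hD', Or.inr hbtw⟩
    · obtain ⟨D', hD', hbtw⟩ := aux_cross (P := A) (R := C) (a := a) (b := b) (c := c)
        (by nlinarith)
      exact ⟨D', hD', Or.inl hbtw⟩
  · rcases lt_or_gt_of_ne hA with h1 | h1
    · obtain ⟨D', hD', hbtw⟩ := aux_cross (P := A) (R := C) (a := a) (b := b) (c := c)
        (by nlinarith)
      exact ⟨D', hD', Or.inl hbtw⟩
    · have h2 : a * B.1 + b * B.2 + c < 0 := by nlinarith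
      obtain ⟨D', hD', hbtw⟩ := aux_cross (P := B) (R := C) (a := a) (b := b) (c := c)
        (by nlinarith)
      exact ⟨D', hD', Or.inr hbtw⟩
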